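/- arXiv:2008.01075 — 2 statements merged into one kernel-verified Lean document; each statement's English description precedes it below -/
import Mathlib

section
/- Let S and X be natural numbers with 0 < X, X < S, S − X even, and ((S − X)/2) AND X = 0, and let g = (Nat.digits 2 X).count 1 be the number of 1s in the binary representation of X. Then the number of unordered pairs of natural numbers with sum S and XOR equal to X, i.e., the cardinality of {(a, b) : a ≤ b ∧ a + b = S ∧ a XOR b = X}, equals 2^(g − 1). (Moreover all such pairs automatically consist of positive integers.) -/
private lemma add_eq_xor_add_two_and (a b : ℕ) : a + b = (a ^^^ b) + 2 * (a &&& b) := by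
  induction a using Nat.binaryRec generalizing b with
  | zero => simp
  | bit ba m ih =>
    induction b using Nat.bitCasesOn with
    | bit bb n =>
      have h := ih n
      rw [Nat.xor_bit, Nat.land_bit, Nat.bit_val, Nat.bit_val, Nat.bit_val, Nat.bit_val]
      cases ba <;> cases bb <;> simp <;> omega

private lemma mem_bitIndices_iff {n i : ℕ} : i ∈ n.bitIndices ↔ n.testBit i = true := by
  induction n using Nat.strong_induction_on generalizing i with
  | _ n ih =>
    rcases Nat.eq_zero_or_pos n with rfl | hn
    · simp
    obtain h | h := Nat.mod_two_eq_zero_or_one n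
    · obtain ⟨m, rfl⟩ : ∃ m, n = 2 * m := ⟨n / 2, by omega⟩
      rw [Nat.bitIndices_two_mul]
      cases i with
      | zero => simp
      | succ j =>
        have hd : 2 * m / 2 = m := by omega
        simp [Nat.testBit_succ, hd, ih m (by omega)]
    · obtain ⟨m, rfl⟩ : ∃ m, n = 2 * m + 1 := ⟨n / 2, by omega⟩
      rw [Nat.bitIndices_two_mul_add_one]
      cases i with
      | zero => simp
      | succ j =>
        have hd : (2 * m + 1) / 2 = m := by omega
        simp [Nat.testBit_succ, hd, ih m (by omega)]

private lemma count_digits_eq_length_bitIndices (n : ℕ) :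
    (Nat.digits 2 n).count 1 = n.bitIndices.length := by
  induction n using Nat.strong_induction_on with
  | _ n ih =>
    rcases Nat.eq_zero_or_pos n with rfl | hn
    · simp
    obtain h | h := Nat.mod_two_eq_zero_or_one n
    · obtain ⟨m, rfl⟩ : ∃ m, n = 2 * m := ⟨n / 2, by omega⟩
      rw [Nat.digits_def' one_lt_two hn, Nat.bitIndices_two_mul]
      have := ih m (by omega)
      simp only [Nat.mul_mod_right, Nat.mul_div_cancel_left _ (by norm_num : 0 < 2),
        List.count_cons, List.length_map, this]
      simp
    · obtain ⟨m, rfl⟩ : ∃ m, n = 2 * m + 1 := ⟨n / 2, by omega⟩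
      rw [Nat.digits_def' one_lt_two hn, Nat.bitIndices_two_mul_add_one]
      have := ih m (by omega)
      have h2 : (2 * m + 1) % 2 = 1 := by omega
      have h3 : (2 * m + 1) / 2 = m := by omega
      simp [h2, h3, List.count_cons, this]

private lemma and_eq_self_iff {u X : ℕ} :
    u &&& X = u ↔ ∀ i, u.testBit i = true → X.testBit i = true := by
  constructor
  · intro h i hi
    have h2 := congrArg (fun n => n.testBit i) h
    simp only [Nat.testBit_land, hi, Bool.true_and] at h2
    exact h2
  · intro h
    apply Nat.eq_of_testBit_eq
    intro i
    rw [Nat.testBit_land]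
    cases hu : u.testBit i
    · simp
    · simp [h i hu]

theorem count_pairs_sum_xor (S X : ℕ) (hX : 0 < X) (hXS : X < S)
    (heven : (S - X) % 2 = 0) (hand : ((S - X) / 2) &&& X = 0)
    (g : ℕ) (hg : g = (Nat.digits 2 X).count 1) :
    {p : ℕ × ℕ | p.1 ≤ p.2 ∧ p.1 + p.2 = S ∧ p.1 ^^^ p.2 = X}.ncard =
      2 ^ (g - 1) := by
  set C := (S - X) / 2 with hC
  have hS : S = X + 2 * C := by omega
  have hXne : X ≠ 0 := hX.ne'
  -- bit-level disjointness of C and X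
  have hCX : ∀ i, (C.testBit i && X.testBit i) = false := by
    intro i
    rw [← Nat.testBit_land, hand, Nat.zero_testBit]
  -- the set of submasks of X
  set T : Set ℕ := {u | u &&& X = u} with hT
  set f : ℕ → ℕ × ℕ := fun u => (C ^^^ u, C ^^^ (u ^^^ X)) with hf
  set O : Set (ℕ × ℕ) := {p | p.1 + p.2 = S ∧ p.1 ^^^ p.2 = X} with hO
  have hfinj : Function.Injective f := by
    intro u v huv
    have h1 : C ^^^ u = C ^^^ v := congrArg Prod.fst huv
    exact Nat.xor_right_injective h1
  -- O is the image of T under f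
  have hOT : O = f '' T := by
    ext ⟨a, b⟩
    constructor
    · rintro ⟨hsum, hxor⟩
      refine ⟨a &&& X, ?_, ?_⟩
      · show (a &&& X) &&& X = a &&& X
        apply and_eq_self_iff.mpr
        intro i hi
        rw [Nat.testBit_land] at hi
        exact ((Bool.and_eq_true _ _).mp hi).2
      · have hab : a &&& b = C := by
          have := add_eq_xor_add_two_and a b
          simp only at hsum hxor
          omega
        have ha : C ^^^ (a &&& X) = a := by
          apply Nat.eq_of_testBit_eq
          intro i
          have h1 := congrArg (fun n => n.testBit i) hab
          have h2 := congrArg (fun n => n.testBit i) hxor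
          simp only [Nat.testBit_xor, Nat.testBit_land] at h1 h2 ⊢
          rw [← h1, ← h2]
          cases a.testBit i <;> cases b.testBit i <;> rfl
        have hb : C ^^^ ((a &&& X) ^^^ X) = b := by
          apply Nat.eq_of_testBit_eq
          intro i
          have h1 := congrArg (fun n => n.testBit i) hab
          have h2 := congrArg (fun n => n.testBit i) hxor
          simp only [Nat.testBit_xor, Nat.testBit_land] at h1 h2 ⊢
          rw [← h1, ← h2]
          cases a.testBit i <;> cases b.testBit i <;> rfl
        simp only [hf, Prod.mk.injEq]
        exact ⟨ha, hb⟩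
    · rintro ⟨u, hu, heq⟩
      have e1 : C ^^^ u = a := congrArg Prod.fst heq
      have e2 : C ^^^ (u ^^^ X) = b := congrArg Prod.snd heq
      subst e1
      subst e2
      have hu' : ∀ i, u.testBit i = true → X.testBit i = true := and_eq_self_iff.mp hu
      have hxor : (C ^^^ u) ^^^ (C ^^^ (u ^^^ X)) = X := by
        apply Nat.eq_of_testBit_eq
        intro i
        simp only [Nat.testBit_xor]
        cases C.testBit i <;> cases u.testBit i <;> cases X.testBit i <;> rfl
      have hAND : (C ^^^ u) &&& (C ^^^ (u ^^^ X)) = C := by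
        apply Nat.eq_of_testBit_eq
        intro i
        have h1 := hCX i
        have h2 := hu' i
        simp only [Nat.testBit_land, Nat.testBit_xor]
        cases hc : C.testBit i <;> cases hx : X.testBit i <;>
          cases hun : u.testBit i <;>
          first
            | decide
            | (rw [hc, hx] at h1; exact absurd h1 (by decide))
            | (rw [hx] at h2; exact absurd (h2 hun) (by decide))
      constructor
      · show (C ^^^ u) + (C ^^^ (u ^^^ X)) = S
        rw [add_eq_xor_add_two_and, hxor, hAND, hS]
      · exact hxor
  -- T is the image of the powerset of the bit-set of X
  set F : Finset ℕ := X.bitIndices.toFinset with hF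
  have hTF : T = (fun s : Finset ℕ => ∑ i ∈ s, 2 ^ i) '' ↑F.powerset := by
    ext u
    simp only [hT, Set.mem_setOf_eq, Set.mem_image, Finset.coe_powerset,
      Set.mem_preimage, Set.mem_powerset_iff, Finset.coe_subset, Finset.mem_coe,
      Finset.mem_powerset]
    constructor
    · intro hu
      refine ⟨u.bitIndices.toFinset, ?_, Finset.twoPowSum_toFinset_bitIndices u⟩
      intro i hi
      rw [List.mem_toFinset, mem_bitIndices_iff] at hi ⊢
      exact and_eq_self_iff.mp hu i hi
    · rintro ⟨s, hs, rfl⟩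
      rw [and_eq_self_iff]
      intro i hi
      rw [← mem_bitIndices_iff, ← List.mem_toFinset,
        Finset.toFinset_bitIndices_twoPowSum s] at hi
      rw [← mem_bitIndices_iff, ← List.mem_toFinset]
      exact hs hi
  have hgF : g = F.card := by
    rw [hg, count_digits_eq_length_bitIndices, hF,
      List.toFinset_card_of_nodup Nat.bitIndices_sorted.nodup]
  have hTcard : T.ncard = 2 ^ g := by
    rw [hTF, Set.ncard_image_of_injective _ (Finset.geomSum_injective le_rfl),
      Set.ncard_coe_finset, Finset.card_powerset, hgF]
  have hTfin : T.Finite := by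
    rw [hTF]
    exact (F.powerset : Set (Finset ℕ)).toFinite.image _
  have hOfin : O.Finite := by rw [hOT]; exact hTfin.image f
  have hOcard : O.ncard = 2 ^ g := by
    rw [hOT, Set.ncard_image_of_injective _ hfinj, hTcard]
  -- the target set
  set P : Set (ℕ × ℕ) := {p : ℕ × ℕ | p.1 ≤ p.2 ∧ p.1 + p.2 = S ∧ p.1 ^^^ p.2 = X} with hP
  have hPO : P ⊆ O := by rintro p ⟨_, h1, h2⟩; exact ⟨h1, h2⟩
  have hne : ∀ p ∈ O, p.1 ≠ p.2 := by
    rintro p ⟨_, hxor⟩ heq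
    rw [heq, Nat.xor_self] at hxor
    exact hXne hxor.symm
  have hswap : Prod.swap '' P = O \ P := by
    ext ⟨a, b⟩
    constructor
    · rintro ⟨⟨c, d⟩, ⟨hle, hsum, hxor⟩, hsw⟩
      simp only [Prod.swap_prod_mk, Prod.mk.injEq] at hsw
      obtain ⟨rfl, rfl⟩ := hsw
      simp only at hle hsum hxor
      have hsum' : c + d = S := hsum
      have hxor' : c ^^^ d = X := hxor
      have hOmem : ((d : ℕ), c) ∈ O := by
        refine ⟨?_, ?_⟩
        · show d + c = S
          omega
        · show d ^^^ c = X
          rw [Nat.xor_comm]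
          exact hxor'
      refine ⟨hOmem, ?_⟩
      rintro ⟨hle', _, _⟩
      exact hne _ hOmem (le_antisymm hle' hle)
    · rintro ⟨⟨hsum, hxor⟩, hnP⟩
      have hlt : b < a := by
        by_contra hba
        exact hnP ⟨by omega, hsum, hxor⟩
      refine ⟨(b, a), ⟨hlt.le, ?_, ?_⟩, rfl⟩
      · simpa [add_comm] using hsum
      · simpa [Nat.xor_comm] using hxor
  have hPfin : P.Finite := hOfin.subset hPO
  have hcard_eq : (O \ P).ncard = P.ncard := by
    rw [← hswap, Set.ncard_image_of_injective _ Prod.swap_injective]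
  have hsplit : (O \ P).ncard + P.ncard = O.ncard :=
    Set.ncard_diff_add_ncard_of_subset hPO hOfin
  have hg1 : 1 ≤ g := by
    rw [hgF]
    have : F.Nonempty := by
      rcases hempty : X.bitIndices with _ | ⟨i, l⟩
      · exfalso
        have hs := Nat.twoPowSum_bitIndices X
        rw [hempty] at hs
        simp at hs
        exact hXne hs.symm
      · refine ⟨i, ?_⟩
        rw [hF, hempty]
        simp
    exact Finset.card_pos.mpr this
  have hpow : 2 ^ g = 2 * 2 ^ (g - 1) := by
    conv_lhs => rw [show g = (g - 1) + 1 by omega]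
    rw [pow_succ]
    ring
  show P.ncard = 2 ^ (g - 1)
  omega
end

section
/- For every natural number k, twice the number of positions of the form (a, b, a + b) with nim-sum zero, 0 < a < b, in which all piles have k or fewer binary digits, equals 3^k + 1 − 2^(k+1). Formally: 2 * |{(a, b) : 0 < a ∧ a < b ∧ a AND b = 0 ∧ a + b < 2^k}| = 3^k + 1 − 2^(k+1). (Equivalently, the count equals 3^k/2 − 2^k + 1/2.) -/
open Finset

private lemma and_zero_iff (a b : ℕ) :
    a &&& b = 0 ↔ ∀ i, a.testBit i = false ∨ b.testBit i = false := by
  constructor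
  · intro h i
    have := congrArg (Nat.testBit · i) h
    simp only [Nat.testBit_and, Nat.zero_testBit, Bool.and_eq_false_iff] at this
    exact this
  · intro h
    apply Nat.eq_of_testBit_eq
    intro i
    simp only [Nat.testBit_and, Nat.zero_testBit, Bool.and_eq_false_iff]
    exact h i

private lemma and_decomp (a b : ℕ) :
    a &&& b = 0 ↔ (a / 2) &&& (b / 2) = 0 ∧ (a % 2 = 0 ∨ b % 2 = 0) := by
  rw [and_zero_iff, and_zero_iff]
  constructor
  · intro h
    refine ⟨fun i => by simpa [Nat.testBit_div_two] using h (i + 1), ?_⟩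
    have h0 := h 0
    simp only [Nat.testBit_zero, decide_eq_false_iff_not] at h0
    omega
  · rintro ⟨h1, h2⟩ i
    cases i with
    | zero =>
      simp only [Nat.testBit_zero, decide_eq_false_iff_not]
      omega
    | succ i => simpa [Nat.testBit_div_two] using h1 i

private def U (k : ℕ) : Finset (ℕ × ℕ) :=
  (Finset.range (2 ^ k) ×ˢ Finset.range (2 ^ k)).filter
    (fun p => p.1 &&& p.2 = 0 ∧ p.1 + p.2 < 2 ^ k)

private lemma mem_U {k : ℕ} {p : ℕ × ℕ} :
    p ∈ U k ↔ p.1 &&& p.2 = 0 ∧ p.1 + p.2 < 2 ^ k := by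
  simp only [U, mem_filter, mem_product, mem_range]
  constructor
  · tauto
  · intro h
    refine ⟨⟨?_, ?_⟩, h⟩ <;> omega

private lemma card_U (k : ℕ) : (U k).card = 3 ^ k := by
  induction k with
  | zero =>
    have : U 0 = {(0, 0)} := by
      ext p
      simp only [mem_U, mem_singleton, Prod.ext_iff]
      constructor
      · intro h
        constructor <;> omega
      · rintro ⟨h1, h2⟩
        rw [h1, h2]
        simp
    rw [this]; simp
  | succ k ih =>
    have hcard : (U (k + 1)).card = ((U k) ×ˢ Finset.range 3).card := by
      apply Finset.card_nbij' (fun p => ((p.1 / 2, p.2 / 2), p.1 % 2 + 2 * (p.2 % 2)))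
        (fun q => (2 * q.1.1 + q.2 % 2, 2 * q.1.2 + q.2 / 2))
      · rintro ⟨a, b⟩ hp
        rw [mem_coe, mem_U] at hp
        obtain ⟨hand, hsum⟩ := hp
        rw [and_decomp] at hand
        simp only [mem_coe, mem_product, mem_U, mem_range]
        have h2 : (2:ℕ) ^ (k + 1) = 2 * 2 ^ k := by ring
        refine ⟨⟨hand.1, ?_⟩, ?_⟩ <;> omega
      · rintro ⟨⟨a, b⟩, c⟩ hq
        simp only [mem_coe, mem_product, mem_U, mem_range] at hq
        obtain ⟨⟨hand, hsum⟩, hc⟩ := hq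
        rw [mem_coe, mem_U]
        dsimp only
        constructor
        · rw [and_decomp]
          have e1 : (2 * a + c % 2) / 2 = a := by omega
          have e2 : (2 * b + c / 2) / 2 = b := by omega
          rw [e1, e2]
          exact ⟨hand, by omega⟩
        · have h2 : (2:ℕ) ^ (k + 1) = 2 * 2 ^ k := by ring
          omega
      · rintro ⟨a, b⟩ hp
        rw [mem_coe, mem_U, and_decomp] at hp
        simp only [Prod.ext_iff]
        constructor <;> omega
      · rintro ⟨⟨a, b⟩, c⟩ hq
        simp only [mem_coe, mem_product, mem_range] at hq
        simp only [Prod.ext_iff]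
        refine ⟨⟨?_, ?_⟩, ?_⟩ <;> omega
    rw [hcard, Finset.card_product, ih, Finset.card_range]
    ring

private lemma pow_ineq (k : ℕ) : 2 ^ (k + 1) ≤ 3 ^ k + 1 := by
  induction k with
  | zero => norm_num
  | succ k ih =>
    have h3 : (1:ℕ) ≤ 3 ^ k := Nat.one_le_pow _ _ (by norm_num)
    have : (2:ℕ) ^ (k + 2) = 2 * 2 ^ (k + 1) := by ring
    have : (3:ℕ) ^ (k + 1) = 3 * 3 ^ k := by ring
    omega

theorem two_mul_count_positions_le (k : ℕ) :
    2 * {p : ℕ × ℕ | 0 < p.1 ∧ p.1 < p.2 ∧ p.1 &&& p.2 = 0 ∧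
      p.1 + p.2 < 2 ^ k}.ncard = 3 ^ k + 1 - 2 ^ (k + 1) := by
  classical
  set S : Finset (ℕ × ℕ) := (U k).filter (fun p => 0 < p.1 ∧ p.1 < p.2) with hS
  have hset : {p : ℕ × ℕ | 0 < p.1 ∧ p.1 < p.2 ∧ p.1 &&& p.2 = 0 ∧
      p.1 + p.2 < 2 ^ k} = ↑S := by
    ext p
    simp only [Set.mem_setOf_eq, hS, coe_filter, mem_U, Set.mem_setOf_eq]
    tauto
  rw [hset, Set.ncard_coe_finset]
  set S' : Finset (ℕ × ℕ) := (U k).filter (fun p => 0 < p.2 ∧ p.2 < p.1) with hS'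
  set T : Finset (ℕ × ℕ) := (U k).filter (fun p => 0 < p.1 ∧ 0 < p.2) with hT
  -- a = b is impossible in U k when a > 0
  have hne : ∀ p ∈ U k, 0 < p.1 → p.1 ≠ p.2 := by
    rintro ⟨a, b⟩ hp ha hab
    rw [mem_U] at hp
    simp only at hab
    rw [hab, Nat.and_self] at hp
    omega
  -- T = S ∪ S', disjoint
  have hT_card : T.card = S.card + S'.card := by
    rw [← Finset.card_union_of_disjoint]
    · congr 1
      ext p
      simp only [hT, hS, hS', mem_union, mem_filter]
      constructor
      · rintro ⟨hU, h1, h2⟩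
        have := hne p hU h1
        rcases Nat.lt_or_ge p.1 p.2 with h | h
        · exact Or.inl ⟨hU, h1, h⟩
        · exact Or.inr ⟨hU, h2, by omega⟩
      · rintro (⟨hU, h1, h2⟩ | ⟨hU, h1, h2⟩) <;> exact ⟨hU, by omega, by omega⟩
    · rw [Finset.disjoint_left]
      rintro p hp hp'
      simp only [hS, hS', mem_filter] at hp hp'
      omega
  -- S'.card = S.card via swap
  have hswap : S' = S.image Prod.swap := by
    ext ⟨a, b⟩
    simp only [hS, hS', mem_image, mem_filter, mem_U, Prod.exists, Prod.swap_prod_mk,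
      Prod.mk.injEq]
    constructor
    · rintro ⟨⟨hand, hsum⟩, h1, h2⟩
      exact ⟨b, a, ⟨⟨by rwa [Nat.and_comm], by omega⟩, h1, h2⟩, rfl, rfl⟩
    · rintro ⟨x, y, ⟨⟨hand, hsum⟩, h1, h2⟩, rfl, rfl⟩
      exact ⟨⟨by rwa [Nat.and_comm], by omega⟩, h1, h2⟩
  have hS'_card : S'.card = S.card := by
    rw [hswap, Finset.card_image_of_injective _ Prod.swap_injective]
  -- T.card = 3^k - (2^(k+1) - 1)
  have hZ1 : (U k).filter (fun p => p.1 = 0) = (Finset.range (2 ^ k)).image (fun b => (0, b)) := by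
    ext ⟨a, b⟩
    simp only [mem_filter, mem_U, mem_image, mem_range, Prod.mk.injEq]
    constructor
    · rintro ⟨⟨hand, hsum⟩, h0⟩
      exact ⟨b, by omega, by omega, rfl⟩
    · rintro ⟨x, hx, rfl, rfl⟩
      simpa using hx
  have hZ2 : (U k).filter (fun p => p.2 = 0) = (Finset.range (2 ^ k)).image (fun a => (a, 0)) := by
    ext ⟨a, b⟩
    simp only [mem_filter, mem_U, mem_image, mem_range, Prod.mk.injEq]
    constructor
    · rintro ⟨⟨hand, hsum⟩, h0⟩
      exact ⟨a, by omega, rfl, by omega⟩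
    · rintro ⟨x, hx, rfl, rfl⟩
      simpa using hx
  have hZ1card : ((U k).filter (fun p => p.1 = 0)).card = 2 ^ k := by
    rw [hZ1, Finset.card_image_of_injective, Finset.card_range]
    intro x y h
    simpa using h
  have hZ2card : ((U k).filter (fun p => p.2 = 0)).card = 2 ^ k := by
    rw [hZ2, Finset.card_image_of_injective, Finset.card_range]
    intro x y h
    simpa using h
  have hZ : ((U k).filter (fun p => p.1 = 0 ∨ p.2 = 0)).card = 2 ^ (k + 1) - 1 := by
    have hun : (U k).filter (fun p => p.1 = 0 ∨ p.2 = 0) =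
        (U k).filter (fun p => p.1 = 0) ∪ (U k).filter (fun p => p.2 = 0) := by
      rw [← Finset.filter_or]
    have hint : (U k).filter (fun p => p.1 = 0) ∩ (U k).filter (fun p => p.2 = 0) = {(0, 0)} := by
      ext ⟨a, b⟩
      simp only [mem_inter, mem_filter, mem_U, mem_singleton, Prod.mk.injEq]
      constructor
      · rintro ⟨⟨_, h1⟩, _, h2⟩
        exact ⟨h1, h2⟩
      · rintro ⟨rfl, rfl⟩
        have : (0:ℕ) < 2 ^ k := Nat.pow_pos (by norm_num)
        simp [this]
    have := Finset.card_union_add_card_inter ((U k).filter (fun p => p.1 = 0))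
      ((U k).filter (fun p => p.2 = 0))
    rw [hint, hZ1card, hZ2card, Finset.card_singleton] at this
    have h2 : (2:ℕ) ^ (k + 1) = 2 * 2 ^ k := by ring
    rw [hun]
    omega
  have hT2 : T.card = 3 ^ k - (2 ^ (k + 1) - 1) := by
    have hTeq : T = U k \ (U k).filter (fun p => p.1 = 0 ∨ p.2 = 0) := by
      rw [← Finset.filter_not]
      apply Finset.filter_congr
      intro p _
      simp only [not_or]
      omega
    rw [hTeq, Finset.card_sdiff_of_subset (Finset.filter_subset _ _), hZ, card_U]
  have hpow := pow_ineq k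
  have h1 : (1:ℕ) ≤ 2 ^ (k + 1) := Nat.one_le_pow _ _ (by norm_num)
  omega
end
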